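/- Let M be a deterministic macro tree transducer with input alphabet Σ and output alphabet Δ, and let R ⊆ T_Δ be a regular tree language. Then the preimage τ_M⁻¹(R) = { s ∈ T_Σ : τ_M(s) is defined and τ_M(s) ∈ R } is a regular tree language. In particular, the domain dom(τ_M) of τ_M is a regular tree language. -/

import Mathlib

/-! ## Finite ordered ranked trees -/

/-- Finite ordered labeled trees. -/
inductive RTree (α : Type) : Type
  | node : α → List (RTree α) → RTree α

namespace RTree

variable {α β : Type}

/-- The label of the root node. -/
def label : RTree α → α
  | node a _ => a

mutual
  /-- The size (number of nodes) of a tree. -/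
  def size : RTree α → ℕ
    | node _ ts => 1 + sizeList ts
  def sizeList : List (RTree α) → ℕ
    | [] => 0
    | t :: ts => size t + sizeList ts
end

mutual
  /-- The height of a tree (a leaf has height 1). -/
  def height : RTree α → ℕ
    | node _ ts => 1 + heightList ts
  def heightList : List (RTree α) → ℕ
    | [] => 0
    | t :: ts => max (height t) (heightList ts)
end

mutual
  /-- Relabeling of a tree. -/
  def map (f : α → β) : RTree α → RTree β
    | node a ts => node (f a) (mapList f ts)
  def mapList (f : α → β) : List (RTree α) → List (RTree β)
    | [] => []
    | t :: ts => map f t :: mapList f ts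
end

/-- `WF rk t` means `t` is a tree over the ranked alphabet with rank function `rk`:
every node labeled `a` has exactly `rk a` children.  Thus `T_Σ = {t | WF rk t}`. -/
inductive WF (rk : α → ℕ) : RTree α → Prop
  | node {a : α} {ts : List (RTree α)} :
      ts.length = rk a → (∀ t ∈ ts, WF rk t) → WF rk (node a ts)

/-- `SubtreeAt t u r`: `u` is (the Dewey path of) a node of `t` and `r` is the
subtree of `t` rooted at `u`. -/
inductive SubtreeAt : RTree α → List ℕ → RTree α → Prop
  | here (t : RTree α) : SubtreeAt t [] t
  | child {a : α} {ts : List (RTree α)} {i : ℕ} {u : List ℕ} {ti r : RTree α} :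
      ts[i]? = some ti → SubtreeAt ti u r → SubtreeAt (node a ts) (i :: u) r

/-- `ReplaceAt t u r t'`: `u` is a node of `t`, and `t'` is the tree `t[u ← r]`
obtained from `t` by replacing the subtree rooted at `u` by `r`. -/
inductive ReplaceAt : RTree α → List ℕ → RTree α → RTree α → Prop
  | here (t r : RTree α) : ReplaceAt t [] r r
  | child {a : α} {ts : List (RTree α)} {i : ℕ} {u : List ℕ} {r ti ti' : RTree α} :
      ts[i]? = some ti → ReplaceAt ti u r ti' →
      ReplaceAt (node a ts) (i :: u) r (node a (ts.set i ti'))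

end RTree

/-- A (complete) deterministic finite-state bottom-up tree automaton over the
alphabet `S`, with state set `P` and final states `final`. -/
structure BUA (S P : Type) where
  delta : S → List P → P
  final : Set P

variable {S P : Type}

mutual
  /-- The state reached by a bottom-up automaton on a tree. -/
  def buaRun (A : BUA S P) : RTree S → P
    | .node a ts => A.delta a (buaRunList A ts)
  def buaRunList (A : BUA S P) : List (RTree S) → List P
    | [] => []
    | t :: ts => buaRun A t :: buaRunList A ts
end

/-- A tree language over the ranked alphabet `(S, rk)` is regular if it is recognized
by a deterministic finite-state bottom-up tree automaton. -/
def RegularTreeLang (rk : S → ℕ) (L : Set (RTree S)) : Prop :=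
  ∃ (P : Type) (_ : Fintype P) (A : BUA S P),
    L = {t | RTree.WF rk t ∧ buaRun A t ∈ A.final}
/-! ## Deterministic macro tree transducers

A state of rank `m+1` is encoded by `prm q = m` (its number of context parameters).
Right-hand sides of rules are trees over `Δ ∪ Q ∪ X ∪ Y`, where every `Q`-labeled
node has an input variable `x_i` as its (implicit) first child; this is encoded by
the constructor `MRhs.call q i ps`.  A top-down tree transducer is exactly a macro
tree transducer all of whose states have rank one (`prm q = 0`).

To be able to talk about partial inputs `s[u ← x]`, input trees are trees over
`Option S`, where `none` plays the role of the fresh rank-0 symbol `x`; an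
ordinary input tree `s` is represented as `RTree.map some s`.  Outputs (sentential
forms) are trees over the alphabet `PL Q D`: output symbols `PL.out d`, unresolved
state calls `PL.st q` (i.e. `q(x, t₁, …, t_m)`, whose children are the current
parameter trees), and formal context parameters `PL.pr j` (i.e. `y_{j+1}`). -/

/-- Labels of sentential forms produced by a macro tree transducer. -/
inductive PL (Q D : Type) : Type
  | out : D → PL Q D
  | st : Q → PL Q D
  | pr : ℕ → PL Q D

/-- Right-hand sides of rules of a macro tree transducer with states `Q` and output
alphabet `D`: `out d ts` is an output symbol with subtrees, `param j` is the context
parameter `y_{j+1}`, and `call q i ps` is a state call `q(x_{i+1}, ps)`. -/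
inductive MRhs (Q D : Type) : Type
  | out : D → List (MRhs Q D) → MRhs Q D
  | param : ℕ → MRhs Q D
  | call : Q → ℕ → List (MRhs Q D) → MRhs Q D

/-- Well-formedness of a right-hand side for a rule of a state with `m` parameters
and an input symbol of rank `k`: output symbols have the right number of children,
parameters are among `y_1, …, y_m`, input variables are among `x_1, …, x_k`, and a
call of state `q'` passes exactly `prm q'` parameter trees. -/
inductive RhsWF {Q D : Type} (rkD : D → ℕ) (prm : Q → ℕ) (k m : ℕ) : MRhs Q D → Prop
  | out {d ts} : ts.length = rkD d → (∀ t ∈ ts, RhsWF rkD prm k m t) →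
      RhsWF rkD prm k m (.out d ts)
  | param {j} : j < m → RhsWF rkD prm k m (.param j)
  | call {q i ps} : i < k → ps.length = prm q → (∀ t ∈ ps, RhsWF rkD prm k m t) →
      RhsWF rkD prm k m (.call q i ps)

/-- A deterministic macro tree transducer with states `Q`, input alphabet `(S, rkS)`
and output alphabet `(D, rkD)`.  `prm q` is the number of context parameters of
state `q` (so `q` has rank `prm q + 1`); `rules q σ` is the right-hand side of the
`(q,σ)`-rule, if present (determinism: at most one rule per pair). -/
structure MTT (Q S D : Type) where
  rkS : S → ℕ
  rkD : D → ℕ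
  prm : Q → ℕ
  init : Q
  rules : Q → S → Option (MRhs Q D)

namespace MTT

variable {Q S D : Type}

/-- `M` is a well-formed macro tree transducer: the initial state has rank one and
all right-hand sides are well-formed. -/
def Proper (M : MTT Q S D) : Prop :=
  M.prm M.init = 0 ∧
    ∀ q σ r, M.rules q σ = some r → RhsWF M.rkD M.prm (M.rkS σ) (M.prm q) r

/-- `M` is total: there is exactly one rule for every state and input symbol. -/
def Total (M : MTT Q S D) : Prop := ∀ q σ, (M.rules q σ).isSome

end MTT

/-- A top-down tree transducer is a macro tree transducer each of whose states has
rank one, i.e. no context parameters. -/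
def IsTopDown {Q S D : Type} (M : MTT Q S D) : Prop := ∀ q, M.prm q = 0

/-- A macro tree transducer is monadic if its input and output ranked alphabets
only contain symbols of rank 1 and rank 0. -/
def MTT.Monadic {Q S D : Type} (M : MTT Q S D) : Prop :=
  (∀ σ, M.rkS σ ≤ 1) ∧ (∀ d, M.rkD d ≤ 1)

variable {Q S D : Type}

mutual
  /-- Second-order substitution of the parameter leaves `y_{j+1}` of a sentential
  form by the trees `vs`. -/
  def psubst (vs : List (RTree (PL Q D))) : RTree (PL Q D) → RTree (PL Q D)
    | .node (.pr j) _ => vs.getD j (.node (.pr j) [])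
    | .node (.out d) ts => .node (.out d) (psubstList vs ts)
    | .node (.st q) ts => .node (.st q) (psubstList vs ts)
  def psubstList (vs : List (RTree (PL Q D))) :
      List (RTree (PL Q D)) → List (RTree (PL Q D))
    | [] => []
    | t :: ts => psubst vs t :: psubstList vs ts
end

/-- The fresh rank-0 input symbol `x` used in partial inputs `s[u ← x]`. -/
def xLeaf {S : Type} : RTree (Option S) := .node none []

mutual
  /-- Big-step semantics of a macro tree transducer: `MEval M q s t` means that the
  computation of `M` started in state `q` on the input tree `s` (a tree over
  `Option S`, where `none` is the fresh symbol `x` of partial inputs) produces the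
  (sentential form) tree `t`.  On the symbol `x` the computation blocks, yielding
  the unresolved call `q(x, y_1, …, y_m)`.  For `s ∈ T_Σ` (no occurrence of `x`)
  and well-formed transducers, `t` contains no `PL.st` labels, and `M_q(s)` is
  defined iff such a `t` exists; determinism makes `t` unique. -/
  inductive MEval (M : MTT Q S D) : Q → RTree (Option S) → RTree (PL Q D) → Prop
    | atX (q : Q) :
        MEval M q (.node none [])
          (.node (.st q) ((List.range (M.prm q)).map fun j => .node (.pr j) []))
    | step {q : Q} {σ : S} {ss : List (RTree (Option S))} {r : MRhs Q D}
        {t : RTree (PL Q D)} :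
        M.rules q σ = some r → MExpand M ss r t → MEval M q (.node (some σ) ss) t

  /-- Evaluation of a right-hand side with current input subtrees `ss`. -/
  inductive MExpand (M : MTT Q S D) :
      List (RTree (Option S)) → MRhs Q D → RTree (PL Q D) → Prop
    | out {ss d ts us} : MExpandList M ss ts us →
        MExpand M ss (.out d ts) (.node (.out d) us)
    | param {ss j} : MExpand M ss (.param j) (.node (.pr j) [])
    | call {ss : List (RTree (Option S))} {q : Q} {i : ℕ} {ps : List (MRhs Q D)}
        {si : RTree (Option S)} {vs : List (RTree (PL Q D))} {u : RTree (PL Q D)} :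
        ss[i]? = some si → MExpandList M ss ps vs → MEval M q si u →
        MExpand M ss (.call q i ps) (psubst vs u)

  inductive MExpandList (M : MTT Q S D) :
      List (RTree (Option S)) → List (MRhs Q D) → List (RTree (PL Q D)) → Prop
    | nil {ss} : MExpandList M ss [] []
    | cons {ss t ts u us} : MExpand M ss t u → MExpandList M ss ts us →
        MExpandList M ss (t :: ts) (u :: us)
end

/-- The translation `τ_M ⊆ T_Σ × T_Δ` realized by a macro tree transducer `M`
(the graph of the partial function `τ_M : T_Σ ⇀ T_Δ`). -/
def MTT.tau (M : MTT Q S D) : Set (RTree S × RTree D) :=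
  {p | RTree.WF M.rkS p.1 ∧ MEval M M.init (RTree.map some p.1) (RTree.map PL.out p.2)}

/-! ## Statement 0

For a deterministic macro tree transducer `M` and a regular tree language
`R ⊆ T_Δ`, the preimage `τ_M⁻¹(R) = {s ∈ T_Σ | τ_M(s) defined and τ_M(s) ∈ R}`
is regular; in particular `dom τ_M` is regular. -/
section MTTInverse

variable {Q S D P : Type}

/-- Custom induction principle for `RTree`. -/
theorem RTree.ind' {α} {motive : RTree α → Prop}
    (h : ∀ a ts, (∀ t ∈ ts, motive t) → motive (RTree.node a ts)) : ∀ t, motive t := by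
  intro t
  induction t using RTree.rec (motive_2 := fun ts => ∀ t ∈ ts, motive t) with
  | node a ts ih => exact h a ts ih
  | nil => rename_i x hx; cases hx
  | cons t ts ih ihs =>
      rename_i x hx
      rcases List.mem_cons.mp hx with h'|h'
      · exact h' ▸ ih
      · exact ihs x h'

/-- Custom induction principle for `MRhs`. -/
theorem MRhs.ind' {motive : MRhs Q D → Prop}
    (hout : ∀ d ts, (∀ t ∈ ts, motive t) → motive (.out d ts))
    (hparam : ∀ j, motive (.param j))
    (hcall : ∀ q i ps, (∀ t ∈ ps, motive t) → motive (.call q i ps)) :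
    ∀ r, motive r := by
  intro r
  induction r using MRhs.rec (motive_2 := fun ts => ∀ t ∈ ts, motive t) with
  | out d ts ih => exact hout d ts ih
  | param j => exact hparam j
  | call q i ps ih => exact hcall q i ps ih
  | nil => rename_i x hx; cases hx
  | cons t ts ih ihs =>
      rename_i x hx
      rcases List.mem_cons.mp hx with h'|h'
      · exact h' ▸ ih
      · exact ihs x h'

theorem RTree.mapList_eq_map {α β} (f : α → β) (ts : List (RTree α)) :
    RTree.mapList f ts = ts.map (RTree.map f) := by
  induction ts with
  | nil => rfl
  | cons t ts ih => simp [RTree.mapList, ih]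

theorem buaRunList_eq_map (A : BUA S P) (ts : List (RTree S)) :
    buaRunList A ts = ts.map (buaRun A) := by
  induction ts with
  | nil => rfl
  | cons t ts ih => simp [buaRunList, ih]

theorem psubstList_eq_map (vs : List (RTree (PL Q D))) (ts : List (RTree (PL Q D))) :
    psubstList vs ts = ts.map (psubst vs) := by
  induction ts with
  | nil => rfl
  | cons t ts ih => simp [psubstList, ih]

/-- Well-formed sentential forms without state calls: `out`-nodes respect arities and
parameters are below `m`. -/
inductive FormWF (rkD : D → ℕ) (m : ℕ) : RTree (PL Q D) → Prop
  | out {d ts} : ts.length = rkD d → (∀ t ∈ ts, FormWF rkD m t) →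
      FormWF rkD m (.node (.out d) ts)
  | pr {j} : j < m → FormWF rkD m (.node (.pr j) [])

mutual
  /-- Run a bottom-up automaton on a sentential form, with parameter assignment `ρ`. -/
  def formRun (A : BUA D P) (m : ℕ) (ρ : Fin m → P) : RTree (PL Q D) → Option P
    | .node (.out d) ts => (formRunList A m ρ ts).map (A.delta d)
    | .node (.pr j) _ => if h : j < m then some (ρ ⟨j, h⟩) else none
    | .node (.st _) _ => none
  def formRunList (A : BUA D P) (m : ℕ) (ρ : Fin m → P) :
      List (RTree (PL Q D)) → Option (List P)
    | [] => some []
    | t :: ts => (formRun A m ρ t).bind fun p =>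
        (formRunList A m ρ ts).map fun ps => p :: ps
end

/-- Behavior functions: the state space of the constructed automaton. -/
def Beh (M : MTT Q S D) (P : Type) := ∀ q : Q, (Fin (M.prm q) → P) → Option P

noncomputable instance behFintype (M : MTT Q S D) [Fintype Q] [Fintype P] :
    Fintype (Beh M P) := by
  classical
  unfold Beh
  infer_instance

mutual
  /-- Evaluate a right-hand side to an automaton state, given behaviors of the subtrees. -/
  def rhsRun (M : MTT Q S D) (A : BUA D P) (βs : List (Beh M P)) (m : ℕ) (ρ : Fin m → P) :
      MRhs Q D → Option P
    | .out d ts => (rhsRunList M A βs m ρ ts).map (A.delta d)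
    | .param j => if h : j < m then some (ρ ⟨j, h⟩) else none
    | .call q i ps =>
      match βs[i]?, rhsRunList M A βs m ρ ps with
      | some β, some vs =>
        if h : vs.length = M.prm q then β q (fun j => vs.get (Fin.cast h.symm j)) else none
      | _, _ => none
  def rhsRunList (M : MTT Q S D) (A : BUA D P) (βs : List (Beh M P)) (m : ℕ)
      (ρ : Fin m → P) : List (MRhs Q D) → Option (List P)
    | [] => some []
    | r :: rs => (rhsRun M A βs m ρ r).bind fun p =>
        (rhsRunList M A βs m ρ rs).map fun ps => p :: ps
end

/-- The constructed bottom-up automaton on input trees. -/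
def mttBUA (M : MTT Q S D) (A : BUA D P) (F : Set (Beh M P)) : BUA S (Beh M P) where
  delta σ βs := fun q ρ =>
    match M.rules q σ with
    | none => none
    | some r => rhsRun M A βs (M.prm q) ρ r
  final := F

theorem formRunList_forall₂ {A : BUA D P} {m : ℕ} {ρ : Fin m → P}
    {us : List (RTree (PL Q D))} {vs : List P} :
    formRunList A m ρ us = some vs ↔
      List.Forall₂ (fun u v => formRun A m ρ u = some v) us vs := by
  induction us generalizing vs with
  | nil => cases vs <;> simp [formRunList]
  | cons u us ih =>
    cases vs with
    | nil => simp [formRunList, Option.bind_eq_some_iff, Option.map_eq_some_iff]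
    | cons v vs =>
      simp only [formRunList, Option.bind_eq_some_iff, Option.map_eq_some_iff,
        List.forall₂_cons, ← ih]
      constructor
      · rintro ⟨p, hp, ps, hps, h⟩
        injection h with h1 h2
        exact ⟨h1 ▸ hp, h2 ▸ hps⟩
      · rintro ⟨h1, h2⟩
        exact ⟨v, h1, vs, h2, rfl⟩

theorem forall₂_getD_rel {α β : Type _} {R : α → β → Prop} {l1 : List α} {l2 : List β}
    (h : List.Forall₂ R l1 l2) {j : ℕ} (hj : j < l1.length) (d1 : α) (d2 : β) :
    R (l1.getD j d1) (l2.getD j d2) := by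
  induction h generalizing j with
  | nil => simp at hj
  | cons hr hl ih =>
    cases j with
    | zero => simpa using hr
    | succ j => simpa using ih (by simpa using hj)

theorem formRun_isSome {rkD : D → ℕ} (A : BUA D P) {m : ℕ} {u : RTree (PL Q D)}
    (h : FormWF rkD m u) (ρ : Fin m → P) : ∃ p, formRun A m ρ u = some p := by
  induction h with
  | @out d ts hlen hts ih =>
    have hl : ∃ vs, formRunList A m ρ ts = some vs := by
      clear hlen hts
      induction ts with
      | nil => exact ⟨[], rfl⟩
      | cons t ts iht =>
        obtain ⟨p, hp⟩ := ih t (by simp)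
        obtain ⟨ps, hps⟩ := iht (fun x hx => ih x (by simp [hx]))
        exact ⟨p :: ps, by simp [formRunList, hp, hps]⟩
    obtain ⟨vs, hvs⟩ := hl
    exact ⟨A.delta d vs, by simp [formRun, hvs]⟩
  | @pr j hj => exact ⟨ρ ⟨j, hj⟩, by simp [formRun, hj]⟩

theorem formRunList_some {rkD : D → ℕ} (A : BUA D P) {m : ℕ} (ρ : Fin m → P)
    {us : List (RTree (PL Q D))} (h : ∀ u ∈ us, FormWF rkD m u) :
    ∃ ws, formRunList A m ρ us = some ws ∧
      List.Forall₂ (fun u w => formRun A m ρ u = some w) us ws := by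
  induction us with
  | nil => exact ⟨[], rfl, List.Forall₂.nil⟩
  | cons u us ih =>
    obtain ⟨p, hp⟩ := formRun_isSome A (h u (by simp)) ρ
    obtain ⟨ws, hws, hf⟩ := ih (fun x hx => h x (by simp [hx]))
    exact ⟨p :: ws, by simp [formRunList, hp, hws], List.Forall₂.cons hp hf⟩

theorem formRun_map_out (A : BUA D P) (m : ℕ) (ρ : Fin m → P) :
    ∀ t : RTree D, formRun (Q := Q) A m ρ (RTree.map PL.out t) = some (buaRun A t) := by
  intro t
  induction t using RTree.ind' with
  | _ a ts ih =>
    have hl : formRunList (Q := Q) A m ρ (RTree.mapList PL.out ts)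
        = some (buaRunList A ts) := by
      induction ts with
      | nil => rfl
      | cons t ts iht =>
        simp [RTree.mapList, formRunList, buaRunList, ih t (by simp),
          iht (fun x hx => ih x (by simp [hx]))]
    simp [RTree.map, formRun, hl, buaRun]

theorem formWF_zero {rkD : D → ℕ} {u : RTree (PL Q D)} (h : FormWF rkD 0 u) :
    ∃ t : RTree D, u = RTree.map PL.out t ∧ RTree.WF rkD t := by
  induction h with
  | @out d ts hlen hts ih =>
    have hl : ∃ ts' : List (RTree D), ts = RTree.mapList PL.out ts' ∧
        ts'.length = ts.length ∧ ∀ t ∈ ts', RTree.WF rkD t := by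
      clear hlen hts
      induction ts with
      | nil => exact ⟨[], rfl, rfl, by simp⟩
      | cons t ts iht =>
        obtain ⟨t', ht', hwt⟩ := ih t (by simp)
        obtain ⟨ts', hts', hlen', hwts⟩ := iht (fun x hx => ih x (by simp [hx]))
        refine ⟨t' :: ts', by simp [RTree.mapList, ht', hts'], by simp [hlen'], ?_⟩
        intro x hx
        rcases List.mem_cons.mp hx with h'|h'
        · exact h' ▸ hwt
        · exact hwts x h'
    obtain ⟨ts', hts', hlen', hwts⟩ := hl
    exact ⟨RTree.node d ts', by simp [RTree.map, hts'],
      RTree.WF.node (by omega) hwts⟩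
  | @pr j hj => omega

theorem formWF_psubst {rkD : D → ℕ} {m : ℕ} {u : RTree (PL Q D)} (hu : FormWF rkD m u)
    {m' : ℕ} {vs : List (RTree (PL Q D))}
    (hvs : ∀ j : Fin m, FormWF rkD m' (vs.getD j (.node (.pr j) []))) :
    FormWF rkD m' (psubst vs u) := by
  induction hu with
  | @out d ts hlen hts ih =>
    rw [show psubst vs (RTree.node (PL.out d) ts) = RTree.node (PL.out d) (psubstList vs ts)
      from by simp [psubst]]
    refine FormWF.out (by simp [psubstList_eq_map, hlen]) ?_
    intro x hx
    rw [psubstList_eq_map] at hx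
    obtain ⟨t, ht, rfl⟩ := List.mem_map.mp hx
    exact ih t ht
  | @pr j hj =>
    rw [show psubst vs (RTree.node (PL.pr j) []) = vs.getD j (.node (.pr j) [])
      from by simp [psubst]]
    exact hvs ⟨j, hj⟩

theorem formRun_psubst (A : BUA D P) {rkD : D → ℕ} {m : ℕ} {u : RTree (PL Q D)}
    (hu : FormWF rkD m u) (vs : List (RTree (PL Q D))) {m' : ℕ} (ρ : Fin m' → P)
    (ws : Fin m → P)
    (hvs : ∀ j : Fin m, formRun A m' ρ (vs.getD j (.node (.pr j) [])) = some (ws j)) :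
    formRun A m' ρ (psubst vs u) = formRun A m ws u := by
  induction hu with
  | @out d ts hlen hts ih =>
    have hl : formRunList A m' ρ (psubstList vs ts) = formRunList A m ws ts := by
      clear hlen hts
      induction ts with
      | nil => rfl
      | cons t ts iht =>
        simp [psubstList, formRunList, ih t (by simp),
          iht (fun x hx => ih x (by simp [hx]))]
    rw [show psubst vs (RTree.node (PL.out d) ts) = RTree.node (PL.out d) (psubstList vs ts)
      from by simp [psubst]]
    simp [formRun, hl]
  | @pr j hj =>
    rw [show psubst vs (RTree.node (PL.pr j) []) = vs.getD j (.node (.pr j) [])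
      from by simp [psubst]]
    rw [hvs ⟨j, hj⟩]
    simp [formRun, hj]

theorem expandList_aux {M : MTT Q S D} {A : BUA D P} {βs : List (Beh M P)}
    {ss : List (RTree (Option S))} {m : ℕ}
    {rs : List (MRhs Q D)} {us : List (RTree (PL Q D))}
    (hlist : MExpandList M ss rs us)
    (helem : ∀ r ∈ rs, ∀ u, MExpand M ss r u →
      FormWF M.rkD m u ∧ ∀ ρ : Fin m → P, formRun A m ρ u = rhsRun M A βs m ρ r) :
    us.length = rs.length ∧ (∀ u ∈ us, FormWF M.rkD m u) ∧
      ∀ ρ : Fin m → P, formRunList A m ρ us = rhsRunList M A βs m ρ rs := by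
  induction rs generalizing us with
  | nil => cases hlist; exact ⟨rfl, by simp, fun ρ => rfl⟩
  | cons r rs ih =>
    cases hlist with
    | cons hu hus =>
      obtain ⟨h1, h2, h3⟩ := ih hus (fun x hx => helem x (by simp [hx]))
      obtain ⟨f1, f2⟩ := helem r (by simp) _ hu
      refine ⟨by simp [h1], ?_, fun ρ => ?_⟩
      · intro x hx
        rcases List.mem_cons.mp hx with h'|h'
        · exact h' ▸ f1
        · exact h2 x h'
      · simp [formRunList, rhsRunList, f2 ρ, h3 ρ]

theorem mtt_sound_rhs (M : MTT Q S D) (A : BUA D P) (F : Set (Beh M P))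
    (ts : List (RTree S))
    (ihs : ∀ t ∈ ts, ∀ q u, MEval M q (RTree.map some t) u →
      FormWF M.rkD (M.prm q) u ∧
        ∀ ρ : Fin (M.prm q) → P,
          formRun A (M.prm q) ρ u = buaRun (mttBUA M A F) t q ρ) :
    ∀ r, ∀ m, RhsWF M.rkD M.prm ts.length m r →
      ∀ u, MExpand M (ts.map (RTree.map some)) r u →
        FormWF M.rkD m u ∧
          ∀ ρ : Fin m → P,
            formRun A m ρ u = rhsRun M A (buaRunList (mttBUA M A F) ts) m ρ r := by
  intro r
  induction r using MRhs.ind' with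
  | hout d rs ih =>
    intro m hwfr u hexp
    cases hwfr with
    | out hlen hwts =>
      cases hexp with
      | out hlist =>
        obtain ⟨h1, h2, h3⟩ := expandList_aux hlist
          (fun x hx u hu => ih x hx m (hwts x hx) u hu)
        exact ⟨FormWF.out (h1.trans hlen) h2, fun ρ => by simp [formRun, rhsRun, h3 ρ]⟩
  | hparam j =>
    intro m hwfr u hexp
    cases hwfr with
    | param hj =>
      cases hexp
      exact ⟨FormWF.pr hj, fun ρ => by simp [formRun, rhsRun, hj]⟩
  | hcall q' i ps ih =>
    intro m hwfr u hexp
    cases hwfr with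
    | call hik hlenps hps =>
      cases hexp with
      | @call _ _ _ _ si vs w hsi hlist hev =>
        -- decompose hsi
        rw [List.getElem?_map] at hsi
        obtain ⟨ti, hti, rfl⟩ := Option.map_eq_some_iff.mp hsi
        have htim : ti ∈ ts := List.mem_of_getElem? hti
        obtain ⟨hWFw, hruns⟩ := ihs ti htim q' w hev
        obtain ⟨hlvs, hFWvs, hrunsL⟩ := expandList_aux hlist
          (fun x hx u hu => ih x hx m (hps x hx) u hu)
        have hlvs' : vs.length = M.prm q' := by rw [hlvs, hlenps]
        constructor
        · refine formWF_psubst hWFw ?_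
          intro j
          have hj : (j : ℕ) < vs.length := by omega
          rw [List.getD_eq_getElem _ _ hj]
          exact hFWvs _ (List.getElem_mem hj)
        · intro ρ
          obtain ⟨ws, hws, hf⟩ := formRunList_some A ρ hFWvs
          have hwlen : ws.length = M.prm q' := by
            rw [← hf.length_eq]; exact hlvs'
          set ρ' : Fin (M.prm q') → P := fun j => ws.get (Fin.cast hwlen.symm j) with hρ'
          have hβi : (buaRunList (mttBUA M A F) ts)[i]? = some (buaRun (mttBUA M A F) ti) := by
            rw [buaRunList_eq_map, List.getElem?_map, hti]; rfl
          have hrl : rhsRunList M A (buaRunList (mttBUA M A F) ts) m ρ ps = some ws := by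
            rw [← hrunsL ρ]; exact hws
          have hrhs : rhsRun M A (buaRunList (mttBUA M A F) ts) m ρ (.call q' i ps)
              = buaRun (mttBUA M A F) ti q' ρ' := by
            rw [rhsRun, hβi, hrl]
            simp only []
            rw [dif_pos hwlen]
          rw [hrhs, ← hruns ρ']
          refine formRun_psubst A hWFw vs ρ ρ' ?_
          intro j
          have hj : (j : ℕ) < vs.length := by omega
          have := forall₂_getD_rel hf hj (.node (.pr j) []) (ws.get (Fin.cast hwlen.symm j))
          rw [this]
          congr 1
          rw [hρ']
          simp [List.getD_eq_getElem, hwlen, hlvs']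

theorem mtt_sound (M : MTT Q S D) (hM : M.Proper) (A : BUA D P) (F : Set (Beh M P)) :
    ∀ s : RTree S, RTree.WF M.rkS s →
      ∀ q u, MEval M q (RTree.map some s) u →
        FormWF M.rkD (M.prm q) u ∧
          ∀ ρ : Fin (M.prm q) → P,
            formRun A (M.prm q) ρ u = buaRun (mttBUA M A F) s q ρ := by
  intro s
  induction s using RTree.ind' with
  | _ σ ts ihs =>
    intro hwf q u hev
    rw [show RTree.map some (RTree.node σ ts)
        = RTree.node (some σ) (ts.map (RTree.map some))
      from by simp [RTree.map, RTree.mapList_eq_map]] at hev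
    cases hev with
    | @step _ _ _ r _ hrule hexp =>
      cases hwf with
      | node hlen hall =>
        have hwfr : RhsWF M.rkD M.prm ts.length (M.prm q) r := by
          rw [hlen]; exact hM.2 q σ r hrule
        obtain ⟨h1, h2⟩ := mtt_sound_rhs M A F ts
          (fun t ht => ihs t ht (hall t ht)) r (M.prm q) hwfr u hexp
        refine ⟨h1, fun ρ => ?_⟩
        rw [h2 ρ]
        simp [buaRun, mttBUA, hrule]

theorem rhsRunList_forall₂ {M : MTT Q S D} {A : BUA D P} {βs : List (Beh M P)} {m : ℕ}
    {ρ : Fin m → P} {rs : List (MRhs Q D)} {vs : List P} :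
    rhsRunList M A βs m ρ rs = some vs ↔
      List.Forall₂ (fun r v => rhsRun M A βs m ρ r = some v) rs vs := by
  induction rs generalizing vs with
  | nil => cases vs <;> simp [rhsRunList]
  | cons r rs ih =>
    cases vs with
    | nil => simp [rhsRunList, Option.bind_eq_some_iff, Option.map_eq_some_iff]
    | cons v vs =>
      simp only [rhsRunList, Option.bind_eq_some_iff, Option.map_eq_some_iff,
        List.forall₂_cons, ← ih]
      constructor
      · rintro ⟨p, hp, ps, hps, h⟩
        injection h with h1 h2
        exact ⟨h1 ▸ hp, h2 ▸ hps⟩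
      · rintro ⟨h1, h2⟩
        exact ⟨v, h1, vs, h2, rfl⟩

theorem complete_rhs_list {M : MTT Q S D} {A : BUA D P} {βs : List (Beh M P)}
    {ss : List (RTree (Option S))} {m : ℕ} :
    ∀ (rs : List (MRhs Q D))
      (_ : ∀ r ∈ rs, ∀ (ρ : Fin m → P) p, rhsRun M A βs m ρ r = some p →
        ∃ u, MExpand M ss r u ∧ FormWF M.rkD m u ∧ formRun A m ρ u = some p)
      (ρ : Fin m → P) (vs : List P), rhsRunList M A βs m ρ rs = some vs →
      ∃ us, MExpandList M ss rs us ∧ (∀ u ∈ us, FormWF M.rkD m u) ∧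
        us.length = rs.length ∧ formRunList A m ρ us = some vs := by
  intro rs helem ρ vs hrl
  induction rs generalizing vs with
  | nil =>
    cases (by simpa [rhsRunList] using hrl : vs = [])
    exact ⟨[], MExpandList.nil, by simp, rfl, rfl⟩
  | cons r rs ih =>
    rw [rhsRunList_forall₂] at hrl
    cases hrl with
    | cons hr hrs =>
      obtain ⟨u, hu1, hu2, hu3⟩ := helem r (by simp) ρ _ hr
      obtain ⟨us, g1, g2, g3, g4⟩ := ih (fun x hx => helem x (by simp [hx])) _
        (rhsRunList_forall₂.mpr hrs)
      refine ⟨u :: us, MExpandList.cons hu1 g1, ?_, by simp [g3], by simp [formRunList, hu3, g4]⟩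
      intro x hx
      rcases List.mem_cons.mp hx with h'|h'
      · exact h' ▸ hu2
      · exact g2 x h'

theorem mtt_complete_rhs (M : MTT Q S D) (A : BUA D P) (F : Set (Beh M P))
    (ts : List (RTree S))
    (ihs : ∀ t ∈ ts, ∀ q (ρ : Fin (M.prm q) → P) p,
      buaRun (mttBUA M A F) t q ρ = some p →
      ∃ u, MEval M q (RTree.map some t) u ∧ FormWF M.rkD (M.prm q) u ∧
        formRun A (M.prm q) ρ u = some p) :
    ∀ r m, RhsWF M.rkD M.prm ts.length m r →
      ∀ (ρ : Fin m → P) p,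
        rhsRun M A (buaRunList (mttBUA M A F) ts) m ρ r = some p →
        ∃ u, MExpand M (ts.map (RTree.map some)) r u ∧ FormWF M.rkD m u ∧
          formRun A m ρ u = some p := by
  intro r
  induction r using MRhs.ind' with
  | hout d rs ih =>
    intro m hwfr ρ p hrun
    cases hwfr with
    | out hlen hwts =>
      rw [show rhsRun M A (buaRunList (mttBUA M A F) ts) m ρ (.out d rs)
          = (rhsRunList M A (buaRunList (mttBUA M A F) ts) m ρ rs).map (A.delta d)
        from by rw [rhsRun]] at hrun
      obtain ⟨vs, hvs, rfl⟩ := Option.map_eq_some_iff.mp hrun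
      obtain ⟨us, g1, g2, g3, g4⟩ := complete_rhs_list rs
        (fun x hx ρ p h => ih x hx m (hwts x hx) ρ p h) ρ vs hvs
      exact ⟨.node (.out d) us, MExpand.out g1, FormWF.out (g3.trans hlen) g2,
        by simp [formRun, g4]⟩
  | hparam j =>
    intro m hwfr ρ p hrun
    cases hwfr with
    | param hj =>
      refine ⟨.node (.pr j) [], MExpand.param, FormWF.pr hj, ?_⟩
      rw [← hrun]
      simp [formRun, rhsRun, hj]
  | hcall q' i ps ih =>
    intro m hwfr ρ p hrun
    cases hwfr with
    | call hik hlenps hps =>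
      rw [rhsRun] at hrun
      rcases hβ : (buaRunList (mttBUA M A F) ts)[i]? with _ | β
      · rw [hβ] at hrun; simp at hrun
      rcases hvs : rhsRunList M A (buaRunList (mttBUA M A F) ts) m ρ ps with _ | vs
      · rw [hβ, hvs] at hrun; simp at hrun
      rw [hβ, hvs] at hrun
      simp only [] at hrun
      by_cases hwl : vs.length = M.prm q'
      case neg => rw [dif_neg hwl] at hrun; cases hrun
      rw [dif_pos hwl] at hrun
      -- identify β with the behavior of the i-th subtree
      rw [buaRunList_eq_map, List.getElem?_map] at hβ
      obtain ⟨ti, hti, rfl⟩ := Option.map_eq_some_iff.mp hβ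
      set ρ' : Fin (M.prm q') → P := fun j => vs.get (Fin.cast hwl.symm j) with hρ'
      obtain ⟨us, g1, g2, g3, g4⟩ := complete_rhs_list ps
        (fun x hx ρ p h => ih x hx m (hps x hx) ρ p h) ρ vs hvs
      obtain ⟨w, e1, e2, e3⟩ := ihs ti (List.mem_of_getElem? hti) q' ρ' p hrun
      have huslen : us.length = M.prm q' := by rw [g3, hlenps]
      have hf := formRunList_forall₂.mp g4
      refine ⟨psubst us w, ?_, ?_, ?_⟩
      · refine MExpand.call ?_ g1 e1
        rw [List.getElem?_map, hti]; rfl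
      · refine formWF_psubst e2 ?_
        intro j
        have hj : (j : ℕ) < us.length := by omega
        rw [List.getD_eq_getElem _ _ hj]
        exact g2 _ (List.getElem_mem hj)
      · rw [← e3]
        refine formRun_psubst A e2 us ρ ρ' ?_
        intro j
        have hj : (j : ℕ) < us.length := by omega
        have := forall₂_getD_rel hf hj (.node (.pr j) []) (vs.get (Fin.cast hwl.symm j))
        rw [this]
        congr 1
        rw [hρ']
        simp [List.getD_eq_getElem, hwl, huslen]

theorem mtt_complete (M : MTT Q S D) (hM : M.Proper) (A : BUA D P) (F : Set (Beh M P)) :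
    ∀ s : RTree S, RTree.WF M.rkS s →
      ∀ q (ρ : Fin (M.prm q) → P) p, buaRun (mttBUA M A F) s q ρ = some p →
        ∃ u, MEval M q (RTree.map some s) u ∧ FormWF M.rkD (M.prm q) u ∧
          formRun A (M.prm q) ρ u = some p := by
  intro s
  induction s using RTree.ind' with
  | _ σ ts ihs =>
    intro hwf q ρ p hrun
    cases hwf with
    | node hlen hall =>
      rw [show buaRun (mttBUA M A F) (RTree.node σ ts) q ρ
          = match M.rules q σ with
            | none => none
            | some r => rhsRun M A (buaRunList (mttBUA M A F) ts) (M.prm q) ρ r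
        from by rw [buaRun]; rfl] at hrun
      rcases hr : M.rules q σ with _ | r
      · rw [hr] at hrun; cases hrun
      rw [hr] at hrun
      simp only [] at hrun
      have hwfr : RhsWF M.rkD M.prm ts.length (M.prm q) r := by
        rw [hlen]; exact hM.2 q σ r hr
      obtain ⟨u, h1, h2, h3⟩ := mtt_complete_rhs M A F ts
        (fun t ht => ihs t ht (hall t ht)) r (M.prm q) hwfr ρ p hrun
      refine ⟨u, ?_, h2, h3⟩
      rw [show RTree.map some (RTree.node σ ts)
          = RTree.node (some σ) (ts.map (RTree.map some))
        from by simp [RTree.map, RTree.mapList_eq_map]]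
      exact MEval.step hr h1

end MTTInverse
theorem mtt_inverse_preserves_regular {Q S D : Type}
    [Fintype Q] [Fintype S] [Fintype D]
    (M : MTT Q S D) (hM : MTT.Proper M)
    (R : Set (RTree D)) (hR : RegularTreeLang M.rkD R) :
    RegularTreeLang M.rkS {s | ∃ t, (s, t) ∈ MTT.tau M ∧ t ∈ R} ∧
    RegularTreeLang M.rkS {s | ∃ t, (s, t) ∈ MTT.tau M} := by
  obtain ⟨P, instP, A, hRA⟩ := hR
  have ρ₀ : Fin (M.prm M.init) → P :=
    fun j => absurd j.isLt (by have h := hM.1; omega)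
  set F1 : Set (Beh M P) :=
    {β | ∃ (ρ : Fin (M.prm M.init) → P) (p : P), β M.init ρ = some p ∧ p ∈ A.final} with hF1
  set F2 : Set (Beh M P) :=
    {β | ∃ (ρ : Fin (M.prm M.init) → P) (p : P), β M.init ρ = some p} with hF2
  refine ⟨⟨Beh M P, behFintype M, mttBUA M A F1, ?_⟩, ⟨Beh M P, behFintype M, mttBUA M A F2, ?_⟩⟩
  · ext s
    simp only [Set.mem_setOf_eq]
    constructor
    · rintro ⟨t, ⟨hwf, hev⟩, htR⟩
      refine ⟨hwf, ?_⟩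
      obtain ⟨_, hruns⟩ := mtt_sound M hM A F1 s hwf M.init _ hev
      show buaRun (mttBUA M A F1) s ∈ F1
      rw [hF1]
      refine ⟨ρ₀, buaRun A t, ?_, ?_⟩
      · rw [← hruns ρ₀, formRun_map_out]
      · rw [hRA] at htR; exact htR.2
    · rintro ⟨hwf, hfin⟩
      rw [show (mttBUA M A F1).final = F1 from rfl, hF1] at hfin
      obtain ⟨ρ, p, hβ, hpf⟩ := hfin
      obtain ⟨u, hev, hFW, hrun⟩ := mtt_complete M hM A F1 s hwf M.init ρ p hβ
      rw [hM.1] at hFW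
      obtain ⟨t, rfl, hwt⟩ := formWF_zero hFW
      refine ⟨t, ⟨hwf, hev⟩, ?_⟩
      rw [hRA]
      refine ⟨hwt, ?_⟩
      have h2 := formRun_map_out (Q := Q) A _ ρ t
      rw [hrun] at h2
      injection h2 with h2
      exact h2 ▸ hpf
  · ext s
    simp only [Set.mem_setOf_eq]
    constructor
    · rintro ⟨t, hwf, hev⟩
      refine ⟨hwf, ?_⟩
      obtain ⟨_, hruns⟩ := mtt_sound M hM A F2 s hwf M.init _ hev
      show buaRun (mttBUA M A F2) s ∈ F2
      rw [hF2]
      exact ⟨ρ₀, buaRun A t, by rw [← hruns ρ₀, formRun_map_out]⟩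
    · rintro ⟨hwf, hfin⟩
      rw [show (mttBUA M A F2).final = F2 from rfl, hF2] at hfin
      obtain ⟨ρ, p, hβ⟩ := hfin
      obtain ⟨u, hev, hFW, hrun⟩ := mtt_complete M hM A F2 s hwf M.init ρ p hβ
      rw [hM.1] at hFW
      obtain ⟨t, rfl, hwt⟩ := formWF_zero hFW
      exact ⟨t, hwf, hev⟩
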